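/- Let L ≥ 2, let m ≥ 2 and n ≥ 0 be integers with 2^L ≥ m + n, let a_{−n}, …, a_{m−1} ∈ ℂ with a_{m−1} ≠ 0 and a_{−n} ≠ 0, and let A ∈ ℂ^{2^L×2^L} be the band circulant circ(a_0, …, a_{m−1}, 0, …, 0, a_{−n}, …, a_{−1}). Assume the polynomial g(z) = ∑_{k=−n}^{m−1} a_k z^{k+n} has no zeros on the unit circle. Then A is invertible and for every k ∈ {1, …, L−1}, the k-th reshaped matrix of A^{−1} has rank at most m + n; that is, the QTT ranks of A^{−1} do not exceed m + n. -/

import Mathlib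

/-- The band circulant matrix `circ(a_0, …, a_{m-1}, 0, …, 0, a_{-n}, …, a_{-1})`,
indexed by `ZMod N`. -/
noncomputable def bandCirculant (N m n : ℕ) [NeZero N] (a : ℤ → ℂ) :
    Matrix (ZMod N) (ZMod N) ℂ :=
  Matrix.of fun i j =>
    if ((i - j).val : ℤ) ≤ (m : ℤ) - 1 then a ((i - j).val : ℤ)
    else if (N : ℤ) - (n : ℤ) ≤ ((i - j).val : ℤ) then a (((i - j).val : ℤ) - (N : ℤ))
    else 0

namespace Stmt8Aux

open Polynomial Finset Module Submodule

/-- The symbol coefficients of the band circulant. -/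
noncomputable def cfun (N m n : ℕ) [NeZero N] (a : ℤ → ℂ) (t : ZMod N) : ℂ :=
  if (t.val : ℤ) ≤ (m : ℤ) - 1 then a (t.val : ℤ)
  else if (N : ℤ) - (n : ℤ) ≤ (t.val : ℤ) then a ((t.val : ℤ) - (N : ℤ))
  else 0

lemma bandCirculant_apply (N m n : ℕ) [NeZero N] (a : ℤ → ℂ) (i j : ZMod N) :
    bandCirculant N m n a i j = cfun N m n a (i - j) := rfl

lemma val_iota (N n : ℕ) [NeZero N] (hnN : n < N) {k : ℕ} (hkN : k < N) :
    ((((k : ℤ) - (n : ℤ) : ℤ) : ZMod N).val : ℤ)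
      = if k < n then (k : ℤ) + N - n else (k : ℤ) - n := by
  rw [ZMod.val_intCast]
  split
  · rename_i h
    rw [show (k : ℤ) - n = ((k : ℤ) + N - n) + N * (-1) by ring, Int.add_mul_emod_self_left,
      Int.emod_eq_of_lt (by omega) (by omega)]
  · rename_i h
    rw [Int.emod_eq_of_lt (by omega) (by omega)]

lemma cfun_iota (N m n : ℕ) [NeZero N] (a : ℤ → ℂ) (hm : 2 ≤ m) (hmn : m + n ≤ N)
    {k : ℕ} (hk : k < m + n) :
    cfun N m n a ((((k : ℤ) - (n : ℤ) : ℤ) : ZMod N)) = a ((k : ℤ) - n) := by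
  have hv := val_iota N n (by omega) (show k < N by omega)
  unfold cfun
  by_cases hkn : k < n
  · rw [if_pos hkn] at hv
    rw [if_neg (by omega), if_pos (by omega),
      show ((((k : ℤ) - (n : ℤ) : ℤ) : ZMod N).val : ℤ) - (N : ℤ) = (k : ℤ) - n by omega]
  · rw [if_neg hkn] at hv
    rw [if_pos (by omega),
      show ((((k : ℤ) - (n : ℤ) : ℤ) : ZMod N).val : ℤ) = (k : ℤ) - n by omega]

lemma iota_injOn (N m n : ℕ) [NeZero N] (hmn : m + n ≤ N) :
    Set.InjOn (fun k : ℕ => (((k : ℤ) - (n : ℤ) : ℤ) : ZMod N))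
      ↑(Finset.range (m + n)) := by
  intro k1 h1 k2 h2 he
  simp only [Finset.coe_range, Set.mem_Iio] at h1 h2
  have hmod := (ZMod.intCast_eq_intCast_iff _ _ _).1 he
  have hdvd : (N : ℤ) ∣ ((k2 : ℤ) - k1) := by
    have := hmod.dvd
    simpa using this
  have h0 : (k2 : ℤ) - k1 = 0 := by
    refine Int.eq_zero_of_abs_lt_dvd hdvd ?_
    rw [abs_lt]; omega
  omega

lemma cfun_eq_zero (N m n : ℕ) [NeZero N] (a : ℤ → ℂ) (hm : 2 ≤ m) (hmn : m + n ≤ N)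
    {t : ZMod N}
    (ht : t ∉ (Finset.range (m + n)).image (fun k : ℕ => (((k : ℤ) - (n : ℤ) : ℤ) : ZMod N))) :
    cfun N m n a t = 0 := by
  have hvlt : t.val < N := ZMod.val_lt t
  unfold cfun
  split
  · rename_i h
    exfalso
    apply ht
    refine Finset.mem_image.2 ⟨t.val + n, Finset.mem_range.2 (by omega), ?_⟩
    have : ((t.val + n : ℕ) : ℤ) - n = (t.val : ℤ) := by push_cast; ring
    rw [this]
    push_cast
    simp [ZMod.natCast_val, ZMod.cast_id]
  · split
    · rename_i h h2
      exfalso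
      apply ht
      refine Finset.mem_image.2 ⟨t.val + n - N, Finset.mem_range.2 (by omega), ?_⟩
      have : ((t.val + n - N : ℕ) : ℤ) - n = (t.val : ℤ) - N := by omega
      rw [this]
      push_cast
      simp [ZMod.natCast_val, ZMod.cast_id, ZMod.natCast_self]
    · rfl

lemma sum_cfun (N m n : ℕ) [NeZero N] (a : ℤ → ℂ) (hm : 2 ≤ m) (hmn : m + n ≤ N)
    (f : ZMod N → ℂ) :
    ∑ t : ZMod N, cfun N m n a t * f t
      = ∑ k ∈ Finset.range (m + n),
          a ((k : ℤ) - n) * f ((((k : ℤ) - (n : ℤ) : ℤ) : ZMod N)) := by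
  classical
  rw [← Finset.sum_subset
      (Finset.subset_univ ((Finset.range (m + n)).image
        (fun k : ℕ => (((k : ℤ) - (n : ℤ) : ℤ) : ZMod N))))
      (fun t _ ht => by rw [cfun_eq_zero N m n a hm hmn ht, zero_mul])]
  rw [Finset.sum_image (fun x hx y hy h =>
    iota_injOn N m n hmn (by simpa using hx) (by simpa using hy) h)]
  exact Finset.sum_congr rfl fun k hk => by
    rw [cfun_iota N m n a hm hmn (Finset.mem_range.1 hk)]

lemma pow_val_add (N : ℕ) [NeZero N] {u : ℂ} (hu : u ^ N = 1) (x y : ZMod N) :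
    u ^ (x + y).val = u ^ x.val * u ^ y.val := by
  have h : (x + y).val = (x.val + y.val) % N := ZMod.val_add x y
  rw [h, ← pow_add]
  conv_rhs => rw [← Nat.div_add_mod (x.val + y.val) N]
  rw [pow_add, pow_mul, hu, one_pow, one_mul]

lemma eigen (N m n : ℕ) [NeZero N] (a : ℤ → ℂ) (hm : 2 ≤ m) (hmn : m + n ≤ N)
    (g : Polynomial ℂ)
    (hg : g = ∑ k ∈ Finset.range (m + n),
      Polynomial.C (a ((k : ℤ) - (n : ℤ))) * Polynomial.X ^ k)
    {u : ℂ} (hu : u ^ N = 1) :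
    (∑ t : ZMod N, cfun N m n a t * u ^ t.val) * u ^ n = Polynomial.eval u g := by
  rw [sum_cfun N m n a hm hmn (fun t => u ^ t.val), hg, Polynomial.eval_finset_sum,
    Finset.sum_mul]
  refine Finset.sum_congr rfl fun k hk => ?_
  rw [Finset.mem_range] at hk
  have hv := val_iota N n (by omega) (show k < N by omega)
  simp only [Polynomial.eval_mul, Polynomial.eval_C, Polynomial.eval_pow, Polynomial.eval_X]
  rw [mul_assoc, ← pow_add]
  congr 1
  by_cases hkn : k < n
  · rw [if_pos hkn] at hv
    have hval : (((k : ℤ) - (n : ℤ) : ℤ) : ZMod N).val + n = k + N := by omega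
    rw [hval, pow_add, hu, mul_one]
  · rw [if_neg hkn] at hv
    have hval : (((k : ℤ) - (n : ℤ) : ℤ) : ZMod N).val + n = k := by omega
    rw [hval]

lemma abs_eq_one_of_pow (N : ℕ) (hN : N ≠ 0) {u : ℂ} (hu : u ^ N = 1) :
    ‖u‖ = 1 := by
  have h : ‖u‖ ^ N = 1 := by
    rw [← norm_pow, hu, norm_one]
  have h0 : 0 ≤ ‖u‖ := norm_nonneg u
  rcases (pow_eq_one_iff_cases.mp h) with h1 | h1 | h1 <;> first | omega | exact h1 | nlinarith

lemma isUnit_bandCirculant (N m n : ℕ) [NeZero N] (a : ℤ → ℂ) (hm : 2 ≤ m)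
    (hmn : m + n ≤ N)
    (g : Polynomial ℂ)
    (hg : g = ∑ k ∈ Finset.range (m + n),
      Polynomial.C (a ((k : ℤ) - (n : ℤ))) * Polynomial.X ^ k)
    (hgU : ∀ u : ℂ, ‖u‖ = 1 → Polynomial.eval u g ≠ 0) :
    IsUnit (bandCirculant N m n a) := by
  classical
  have hN0 : 0 < N := Nat.pos_of_ne_zero (NeZero.ne N)
  rw [Matrix.isUnit_iff_isUnit_det, isUnit_iff_ne_zero]
  intro hdet
  obtain ⟨v, hv0, hv⟩ := Matrix.exists_mulVec_eq_zero_iff.2 hdet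
  set P : Polynomial ℂ := ∑ j : ZMod N, Polynomial.C (v j) * Polynomial.X ^ j.val with hP
  have hPne : P ≠ 0 := by
    obtain ⟨j, hj⟩ := Function.ne_iff.1 hv0
    intro hP0
    apply hj
    have : P.coeff j.val = v j := by
      rw [hP, Polynomial.finset_sum_coeff]
      rw [Finset.sum_eq_single j]
      · simp
      · intro j' _ hj'
        rw [Polynomial.coeff_C_mul, Polynomial.coeff_X_pow, if_neg, mul_zero]
        exact fun h => hj' (ZMod.val_injective N h.symm)
      · simp
    rw [hP0] at this
    simpa using this.symm
  have hPdeg : P.natDegree < N := by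
    have : P.natDegree ≤ N - 1 := by
      apply Polynomial.natDegree_sum_le_of_forall_le
      intro j _
      refine le_trans (Polynomial.natDegree_C_mul_le _ _) ?_
      rw [Polynomial.natDegree_X_pow]
      have := ZMod.val_lt j
      omega
    omega
  have heval : ∀ u ∈ Polynomial.nthRootsFinset N (1 : ℂ), P.eval u = 0 := by
    intro u hu
    have huN : u ^ N = 1 := (Polynomial.mem_nthRootsFinset hN0 _).1 hu
    have habs : ‖u‖ = 1 := abs_eq_one_of_pow N (by omega) huN
    have hμ : (∑ t : ZMod N, cfun N m n a t * u ^ t.val) ≠ 0 := by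
      intro h0
      apply hgU u habs
      rw [← eigen N m n a hm hmn g hg huN, h0, zero_mul]
    have hkey : ∀ i : ZMod N, ∑ j : ZMod N, bandCirculant N m n a i j * v j = 0 := by
      intro i
      have := congrFun hv i
      simpa [Matrix.mulVec, dotProduct] using this
    have hmain : (∑ t : ZMod N, cfun N m n a t * u ^ t.val) * P.eval u = 0 := by
      have h1 : ∑ i : ZMod N, u ^ i.val * (∑ j : ZMod N, bandCirculant N m n a i j * v j)
          = 0 := by
        simp [hkey]
      have hPeval : P.eval u = ∑ j : ZMod N, v j * u ^ j.val := by
        simp [hP, Polynomial.eval_finset_sum]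
      have h2 : ∀ j : ZMod N, ∑ i : ZMod N, u ^ i.val * bandCirculant N m n a i j
          = u ^ j.val * ∑ t : ZMod N, cfun N m n a t * u ^ t.val := by
        intro j
        rw [← Equiv.sum_comp (Equiv.addRight j)
          (fun i => u ^ i.val * bandCirculant N m n a i j), Finset.mul_sum]
        refine Finset.sum_congr rfl fun t _ => ?_
        simp only [Equiv.coe_addRight]
        rw [bandCirculant_apply, add_sub_cancel_right, pow_val_add N huN]
        ring
      rw [hPeval, Finset.mul_sum]
      have h3 : ∀ j : ZMod N,
          (∑ t : ZMod N, cfun N m n a t * u ^ t.val) * (v j * u ^ j.val)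
            = ∑ i : ZMod N, u ^ i.val * (bandCirculant N m n a i j * v j) := by
        intro j
        have hstep : ∑ i : ZMod N, u ^ i.val * (bandCirculant N m n a i j * v j)
            = (∑ i : ZMod N, u ^ i.val * bandCirculant N m n a i j) * v j := by
          rw [Finset.sum_mul]; exact Finset.sum_congr rfl fun i _ => by ring
        rw [hstep, h2 j]; ring
      rw [Finset.sum_congr rfl fun j _ => h3 j, Finset.sum_comm]
      simpa [Finset.mul_sum] using h1
    rcases mul_eq_zero.1 hmain with h | h
    · exact absurd h hμ
    · exact h
  have := Polynomial.eq_zero_of_natDegree_lt_card_of_eval_eq_zero' P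
    (Polynomial.nthRootsFinset N (1 : ℂ)) heval
    (by rw [(Complex.isPrimitiveRoot_exp N (by omega)).card_nthRootsFinset]; exact hPdeg)
  exact hPne this

lemma inv_shift (N m n : ℕ) [NeZero N] (a : ℤ → ℂ) (hA : IsUnit (bandCirculant N m n a))
    (c i j : ZMod N) :
    (bandCirculant N m n a)⁻¹ (i + c) (j + c) = (bandCirculant N m n a)⁻¹ i j := by
  classical
  have hdet : IsUnit (bandCirculant N m n a).det := (Matrix.isUnit_iff_isUnit_det _).1 hA
  have hAB : bandCirculant N m n a * (bandCirculant N m n a)⁻¹ = 1 :=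
    Matrix.mul_nonsing_inv _ hdet
  have hsub : (bandCirculant N m n a).submatrix (Equiv.addRight c) (Equiv.addRight c)
      = bandCirculant N m n a := by
    ext i' j'
    show bandCirculant N m n a (i' + c) (j' + c) = bandCirculant N m n a i' j'
    rw [bandCirculant_apply, bandCirculant_apply, add_sub_add_right_eq_sub]
  have h1 : (bandCirculant N m n a).submatrix (Equiv.addRight c) (Equiv.addRight c) *
      ((bandCirculant N m n a)⁻¹.submatrix (Equiv.addRight c) (Equiv.addRight c)) = 1 := by
    rw [Matrix.submatrix_mul_equiv, hAB, Matrix.submatrix_one_equiv]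
  rw [hsub] at h1
  have h2 := Matrix.inv_eq_right_inv h1
  exact (congrFun (congrFun h2 i) j).symm

lemma inv_circ (N m n : ℕ) [NeZero N] (a : ℤ → ℂ) (hA : IsUnit (bandCirculant N m n a))
    (i j : ZMod N) :
    (bandCirculant N m n a)⁻¹ i j = (bandCirculant N m n a)⁻¹ (i - j) 0 := by
  have := inv_shift N m n a hA j (i - j) 0
  rw [sub_add_cancel, zero_add] at this
  exact this

lemma conv (N m n : ℕ) [NeZero N] (a : ℤ → ℂ) (hm : 2 ≤ m) (hmn : m + n ≤ N)
    (hA : IsUnit (bandCirculant N m n a)) (d : ZMod N) :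
    ∑ k ∈ Finset.range (m + n),
        a ((k : ℤ) - n) *
          (bandCirculant N m n a)⁻¹ (d - (((k : ℤ) - (n : ℤ) : ℤ) : ZMod N)) 0
      = if d = 0 then 1 else 0 := by
  classical
  have hdet := (Matrix.isUnit_iff_isUnit_det _).1 hA
  have hAB : bandCirculant N m n a * (bandCirculant N m n a)⁻¹ = 1 :=
    Matrix.mul_nonsing_inv _ hdet
  have h1 := congrFun (congrFun hAB d) 0
  rw [Matrix.mul_apply, Matrix.one_apply] at h1
  rw [← Equiv.sum_comp (Equiv.subLeft d)
    (fun s => bandCirculant N m n a d s * (bandCirculant N m n a)⁻¹ s 0)] at h1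
  simp only [Equiv.subLeft_apply] at h1
  have h2 : ∀ t : ZMod N, bandCirculant N m n a d (d - t) = cfun N m n a t := by
    intro t; rw [bandCirculant_apply, sub_sub_cancel]
  rw [Finset.sum_congr rfl (fun t _ => by rw [h2 t])] at h1
  rw [sum_cfun N m n a hm hmn (fun t => (bandCirculant N m n a)⁻¹ (d - t) 0)] at h1
  exact h1

def idx (P : ℕ) (hP0 : 0 < P) (t : ℕ) : Fin P := ⟨t % P, Nat.mod_lt t hP0⟩

noncomputable def wfun (bz : ℤ → ℂ) (N2 P : ℕ) (δ : ℤ) : Fin P → ℂ :=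
  fun e => bz (δ * (N2 : ℤ) + ((e : ℕ) : ℤ) - ((N2 : ℤ) - 1))

noncomputable def Wspace (a : ℤ → ℂ) (m n P : ℕ) (hP0 : 0 < P) :
    Submodule ℂ (Fin P → ℂ) where
  carrier := { f | ∀ c : ℕ, c + (m + n) ≤ P →
    ∑ k ∈ Finset.range (m + n), a ((k : ℤ) - n) * f (idx P hP0 (c + (m + n - 1) - k)) = 0 }
  add_mem' := by
    intro f g hf hg c hc
    simp only [Set.mem_setOf_eq] at hf hg
    simp only [Pi.add_apply, mul_add, Finset.sum_add_distrib, hf c hc, hg c hc, add_zero]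
  zero_mem' := by
    intro c hc
    simp
  smul_mem' := by
    intro r f hf c hc
    simp only [Set.mem_setOf_eq] at hf
    simp only [Pi.smul_apply, smul_eq_mul, mul_left_comm, ← Finset.mul_sum, hf c hc, mul_zero]

lemma mem_Wspace (a : ℤ → ℂ) (m n P : ℕ) (hP0 : 0 < P) (f : Fin P → ℂ) :
    f ∈ Wspace a m n P hP0 ↔ ∀ c : ℕ, c + (m + n) ≤ P →
      ∑ k ∈ Finset.range (m + n), a ((k : ℤ) - n) * f (idx P hP0 (c + (m + n - 1) - k)) = 0 :=
  Iff.rfl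

lemma wfun_congr (bz : ℤ → ℂ) (N1 N2 P : ℕ)
    (hper : ∀ z z' : ℤ, ((N1 * N2 : ℕ) : ℤ) ∣ z - z' → bz z = bz z')
    {δ δ' : ℤ} (h : (N1 : ℤ) ∣ δ - δ') :
    wfun bz N2 P δ = wfun bz N2 P δ' := by
  funext e
  unfold wfun
  apply hper
  obtain ⟨t, ht⟩ := h
  exact ⟨t, by push_cast; linear_combination (N2 : ℤ) * ht⟩

lemma wfun_mem_Wspace (N1 N2 m n : ℕ) (hN2 : 1 ≤ N2) (hm : 2 ≤ m) (a bz : ℤ → ℂ)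
    (hconv : ∀ d : ℤ, (∑ k ∈ Finset.range (m + n), a ((k : ℤ) - n) * bz (d + n - k))
      = if ((N1 * N2 : ℕ) : ℤ) ∣ d then 1 else 0)
    (hP0 : 0 < 2 * N2 - 1)
    {δ : ℤ} (h1 : 1 ≤ δ) (h2 : δ < N1) :
    wfun bz N2 (2 * N2 - 1) δ ∈ Wspace a m n (2 * N2 - 1) hP0 := by
  rw [mem_Wspace]
  intro c hc
  have hterm : ∀ k ∈ Finset.range (m + n),
      a ((k : ℤ) - n) * wfun bz N2 (2 * N2 - 1) δ (idx (2 * N2 - 1) hP0 (c + (m + n - 1) - k))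
        = a ((k : ℤ) - n) * bz ((δ * N2 + c + m - N2) + n - k) := by
    intro k hk
    rw [Finset.mem_range] at hk
    congr 1
    unfold wfun
    have hlt : c + (m + n - 1) - k < 2 * N2 - 1 := by omega
    have hval : (((idx (2 * N2 - 1) hP0 (c + (m + n - 1) - k) : Fin (2 * N2 - 1)) : ℕ) : ℤ)
        = (c : ℤ) + (m + n) - 1 - k := by
      show (((c + (m + n - 1) - k) % (2 * N2 - 1) : ℕ) : ℤ) = _
      rw [Nat.mod_eq_of_lt hlt]
      omega
    rw [hval]
    congr 1
    ring
  rw [Finset.sum_congr rfl hterm, hconv]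
  rw [if_neg]
  intro hdvd
  have haux1 : (N2 : ℤ) ≤ δ * N2 := le_mul_of_one_le_left (by positivity) h1
  have haux2 : δ * N2 + N2 ≤ (N1 : ℤ) * N2 := by
    have := mul_le_mul_of_nonneg_right (show δ + 1 ≤ (N1 : ℤ) by omega)
      (show (0 : ℤ) ≤ N2 by positivity)
    linarith
  have hcc : (c : ℤ) + m + n ≤ 2 * N2 - 1 := by omega
  have hle : ((N1 * N2 : ℕ) : ℤ) ≤ δ * N2 + c + m - N2 :=
    Int.le_of_dvd (by push_cast at *; linarith) hdvd
  push_cast at hle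
  linarith

lemma finrank_Wspace_le (a : ℤ → ℂ) (m n P : ℕ) (hP0 : 0 < P) (hm : 2 ≤ m)
    (ham : a ((m : ℤ) - 1) ≠ 0) :
    Module.finrank ℂ ↥(Wspace a m n P hP0) ≤ m + n - 1 := by
  classical
  by_cases hPle : P ≤ m + n - 1
  · have h := Submodule.finrank_le (Wspace a m n P hP0)
    rw [Module.finrank_fin_fun] at h
    omega
  · push_neg at hPle
    set r := m + n - 1 with hr
    let emb : Fin r → Fin P := fun i => ⟨P - r + i, by have := i.isLt; omega⟩
    let ρ : (Fin P → ℂ) →ₗ[ℂ] (Fin r → ℂ) := LinearMap.funLeft ℂ ℂ emb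
    have hinj : Function.Injective (ρ.comp (Wspace a m n P hP0).subtype) := by
      rw [← LinearMap.ker_eq_bot, LinearMap.ker_eq_bot']
      intro x hx
      obtain ⟨f, hf⟩ := x
      rw [mem_Wspace] at hf
      have h0 : ∀ i : Fin r, f (emb i) = 0 := fun i => congrFun hx i
      have main : ∀ q e (he : e < P), e + q + 1 = P → f ⟨e, he⟩ = 0 := by
        intro q
        induction q using Nat.strong_induction_on with
        | _ q IH =>
          intro e he heq
          by_cases hbdry : P - r ≤ e
          · have hre : e - (P - r) < r := by omega
            have hh := h0 ⟨e - (P - r), hre⟩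
            have hemb : emb ⟨e - (P - r), hre⟩ = ⟨e, he⟩ := by
              apply Fin.ext
              show P - r + (e - (P - r)) = e
              omega
            rwa [hemb] at hh
          · have hc : e + (m + n) ≤ P := by omega
            have hcon := hf e hc
            rw [show m + n = (m + n - 1) + 1 by omega, Finset.sum_range_succ] at hcon
            simp only [Nat.add_sub_cancel] at hcon
            have hz : ∑ k ∈ Finset.range (m + n - 1),
                a ((k : ℤ) - n) * f (idx P hP0 (e + (m + n - 1) - k)) = 0 := by
              refine Finset.sum_eq_zero fun k hk => ?_
              rw [Finset.mem_range] at hk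
              have he' : e + (m + n - 1) - k < P := by omega
              have hidx' : idx P hP0 (e + (m + n - 1) - k) = ⟨e + (m + n - 1) - k, he'⟩ :=
                Fin.ext (Nat.mod_eq_of_lt he')
              rw [hidx', IH (P - 1 - (e + (m + n - 1) - k)) (by omega) _ he' (by omega),
                mul_zero]
            rw [hz, zero_add] at hcon
            have hidxe : idx P hP0 e = ⟨e, he⟩ := Fin.ext (Nat.mod_eq_of_lt he)
            rw [hidxe] at hcon
            have ha' : a (((m + n - 1 : ℕ) : ℤ) - n) ≠ 0 := by
              rw [show ((m + n - 1 : ℕ) : ℤ) - n = (m : ℤ) - 1 by omega]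
              exact ham
            exact (mul_eq_zero.1 hcon).resolve_left ha'
      have hf0 : f = 0 := funext fun e => by
        have := main (P - 1 - e.val) e.val e.isLt (by omega)
        exact this
      exact Subtype.ext hf0
    have hle := LinearMap.finrank_le_finrank_of_injective hinj
    rw [Module.finrank_fin_fun] at hle
    omega

lemma rank_part (N1 N2 m n : ℕ) (hN2 : 1 ≤ N2) (hm : 2 ≤ m) (a : ℤ → ℂ)
    (ham : a ((m : ℤ) - 1) ≠ 0) (bz : ℤ → ℂ)
    (hper : ∀ z z' : ℤ, ((N1 * N2 : ℕ) : ℤ) ∣ z - z' → bz z = bz z')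
    (hconv : ∀ d : ℤ, (∑ k ∈ Finset.range (m + n), a ((k : ℤ) - n) * bz (d + n - k))
      = if ((N1 * N2 : ℕ) : ℤ) ∣ d then 1 else 0)
    (Bhat : Matrix (Fin N1 × Fin N1) (Fin N2 × Fin N2) ℂ)
    (hB : ∀ p : Fin N1 × Fin N1, ∀ q : Fin N2 × Fin N2,
      Bhat p q = bz (((p.1 : ℤ) - (p.2 : ℤ)) * N2 + (q.1 : ℤ) - (q.2 : ℤ))) :
    Matrix.rank Bhat ≤ m + n := by
  classical
  have hP0 : 0 < 2 * N2 - 1 := by omega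
  let ψ : Fin N2 × Fin N2 → Fin (2 * N2 - 1) := fun q => ⟨q.1.val + (N2 - 1) - q.2.val, by
    have := q.1.isLt; have := q.2.isLt; omega⟩
  let Φ : (Fin (2 * N2 - 1) → ℂ) →ₗ[ℂ] ((Fin N2 × Fin N2) → ℂ) := LinearMap.funLeft ℂ ℂ ψ
  set S := Wspace a m n (2 * N2 - 1) hP0 ⊔ (ℂ ∙ wfun bz N2 (2 * N2 - 1) 0) with hS
  have hrow : ∀ p : Fin N1 × Fin N1, Bhat p ∈ Submodule.map Φ S := by
    intro p
    obtain ⟨i1, j1⟩ := p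
    have hN1 : 0 < N1 := i1.pos
    set δ : ℤ := ((i1 : ℤ) - (j1 : ℤ)) % N1 with hδ
    have hδ0 : 0 ≤ δ := Int.emod_nonneg _ (by exact_mod_cast hN1.ne')
    have hδlt : δ < N1 := Int.emod_lt_of_pos _ (by exact_mod_cast hN1)
    have hδdvd : (N1 : ℤ) ∣ (((i1 : ℤ) - j1) - δ) :=
      ⟨((i1 : ℤ) - j1) / N1, by rw [hδ, Int.emod_def]; ring⟩
    have hroweq : Bhat (i1, j1) = Φ (wfun bz N2 (2 * N2 - 1) δ) := by
      rw [← wfun_congr bz N1 N2 (2 * N2 - 1) hper hδdvd]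
      funext q
      obtain ⟨i2, j2⟩ := q
      rw [hB (i1, j1) (i2, j2)]
      show _ = wfun bz N2 (2 * N2 - 1) ((i1 : ℤ) - j1) (ψ (i2, j2))
      unfold wfun
      have hval : (((ψ (i2, j2) : Fin (2 * N2 - 1)) : ℕ) : ℤ)
          = (i2 : ℤ) + ((N2 : ℤ) - 1) - j2 := by
        show (((i2.val + (N2 - 1) - j2.val : ℕ)) : ℤ) = _
        have := i2.isLt; have := j2.isLt
        omega
      rw [hval]
      congr 1
      ring
    rw [hroweq]
    refine Submodule.mem_map_of_mem ?_
    rcases eq_or_lt_of_le hδ0 with h0 | h0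
    · rw [hS, ← h0]
      exact Submodule.mem_sup_right (Submodule.mem_span_singleton_self _)
    · exact Submodule.mem_sup_left
        (wfun_mem_Wspace N1 N2 m n hN2 hm a bz hconv hP0 h0 hδlt)
  have hspan : Submodule.span ℂ (Set.range Bhat) ≤ Submodule.map Φ S :=
    Submodule.span_le.2 (by rintro _ ⟨p, rfl⟩; exact hrow p)
  have h1 : Matrix.rank Bhat = Module.finrank ℂ (Submodule.span ℂ (Set.range Bhat)) :=
    Matrix.rank_eq_finrank_span_row Bhat
  have h2 : Module.finrank ℂ (Submodule.span ℂ (Set.range Bhat))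
      ≤ Module.finrank ℂ (Submodule.map Φ S) := Submodule.finrank_mono hspan
  have h3 : Module.finrank ℂ (Submodule.map Φ S) ≤ Module.finrank ℂ S :=
    Submodule.finrank_map_le Φ S
  have h4 : Module.finrank ℂ ↥S ≤ Module.finrank ℂ ↥(Wspace a m n (2 * N2 - 1) hP0)
      + Module.finrank ℂ ↥(ℂ ∙ wfun bz N2 (2 * N2 - 1) 0) :=
    Submodule.finrank_add_le_finrank_add_finrank _ _
  have h5 : Module.finrank ℂ ↥(ℂ ∙ wfun bz N2 (2 * N2 - 1) 0) ≤ 1 := by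
    by_cases hz : wfun bz N2 (2 * N2 - 1) 0 = 0
    · rw [hz, Submodule.span_zero_singleton]
      simp
    · rw [finrank_span_singleton hz]
  have h6 := finrank_Wspace_le a m n (2 * N2 - 1) hP0 hm ham
  omega

end Stmt8Aux

/-- If `g(z) = ∑_{k=-n}^{m-1} a_k z^{k+n}` has no zeros on the unit circle, the band
circulant `A ∈ ℂ^{2^L × 2^L}` is invertible and the QTT ranks of `A⁻¹` (i.e. the ranks of
all its reshaped matrices) do not exceed `m + n`. -/
theorem stmt8 (L m n : ℕ) (hL : 2 ≤ L) (hm : 2 ≤ m) (hN : m + n ≤ 2 ^ L)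
    (a : ℤ → ℂ) (ham : a ((m : ℤ) - 1) ≠ 0) (han : a (-(n : ℤ)) ≠ 0)
    (g : Polynomial ℂ)
    (hg : g = ∑ k ∈ Finset.range (m + n),
      Polynomial.C (a ((k : ℤ) - (n : ℤ))) * Polynomial.X ^ k)
    (hgU : ∀ u : ℂ, ‖u‖ = 1 → Polynomial.eval u g ≠ 0) :
    IsUnit (bandCirculant (2 ^ L) m n a) ∧
      ∀ k : ℕ, 1 ≤ k → k ≤ L - 1 →
        ∀ Bhat : Matrix (Fin (2 ^ k) × Fin (2 ^ k)) (Fin (2 ^ (L - k)) × Fin (2 ^ (L - k))) ℂ,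
          (∀ (i₁ j₁ : Fin (2 ^ k)) (i₂ j₂ : Fin (2 ^ (L - k))),
            Bhat (i₁, j₁) (i₂, j₂)
              = (bandCirculant (2 ^ L) m n a)⁻¹
                  ((((i₁ : ℕ) * 2 ^ (L - k) + (i₂ : ℕ) : ℕ) : ZMod (2 ^ L)))
                  ((((j₁ : ℕ) * 2 ^ (L - k) + (j₂ : ℕ) : ℕ) : ZMod (2 ^ L)))) →
          Matrix.rank Bhat ≤ m + n := by
  have hA := Stmt8Aux.isUnit_bandCirculant (2 ^ L) m n a hm hN g hg hgU
  refine ⟨hA, ?_⟩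
  intro k hk1 hkL Bhat hB
  have hkL' : k ≤ L := by omega
  have hNN : 2 ^ k * 2 ^ (L - k) = 2 ^ L := by
    rw [← pow_add]
    congr 1
    omega
  set bz : ℤ → ℂ := fun z => (bandCirculant (2 ^ L) m n a)⁻¹ ((z : ZMod (2 ^ L))) 0
    with hbz
  have hper : ∀ z z' : ℤ, ((2 ^ k * 2 ^ (L - k) : ℕ) : ℤ) ∣ z - z' → bz z = bz z' := by
    intro z z' hd
    rw [hNN] at hd
    have hcast : ((z : ZMod (2 ^ L))) = ((z' : ZMod (2 ^ L))) := by
      rw [ZMod.intCast_eq_intCast_iff]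
      exact (Int.modEq_iff_dvd.2 hd).symm
    rw [hbz]
    simp only [hcast]
  have hconv : ∀ d : ℤ, (∑ k' ∈ Finset.range (m + n), a ((k' : ℤ) - n) * bz (d + n - k'))
      = if ((2 ^ k * 2 ^ (L - k) : ℕ) : ℤ) ∣ d then 1 else 0 := by
    intro d
    have hc := Stmt8Aux.conv (2 ^ L) m n a hm hN hA ((d : ZMod (2 ^ L)))
    have hterm : ∀ k' ∈ Finset.range (m + n),
        a ((k' : ℤ) - n) * (bandCirculant (2 ^ L) m n a)⁻¹
            (((d : ZMod (2 ^ L))) - (((k' : ℤ) - (n : ℤ) : ℤ) : ZMod (2 ^ L))) 0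
          = a ((k' : ℤ) - n) * bz (d + n - k') := by
      intro k' _
      rw [hbz]
      congr 2
      push_cast
      ring
    rw [Finset.sum_congr rfl hterm] at hc
    rw [hc]
    have hiff : ((d : ZMod (2 ^ L)) = 0) ↔ ((2 ^ k * 2 ^ (L - k) : ℕ) : ℤ) ∣ d := by
      rw [ZMod.intCast_zmod_eq_zero_iff_dvd, hNN]
    rw [if_congr hiff rfl rfl]
  have hB' : ∀ p : Fin (2 ^ k) × Fin (2 ^ k), ∀ q : Fin (2 ^ (L - k)) × Fin (2 ^ (L - k)),
      Bhat p q = bz (((p.1 : ℤ) - (p.2 : ℤ)) * (2 ^ (L - k) : ℕ) + (q.1 : ℤ) - (q.2 : ℤ)) := by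
    intro p q
    obtain ⟨i1, j1⟩ := p
    obtain ⟨i2, j2⟩ := q
    rw [hB i1 j1 i2 j2, Stmt8Aux.inv_circ (2 ^ L) m n a hA, hbz]
    congr 1
    push_cast
    ring
  exact Stmt8Aux.rank_part (2 ^ k) (2 ^ (L - k)) m n Nat.one_le_two_pow hm a ham bz hper hconv
    Bhat hB'
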